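/- Fix n ∈ ℕ and let c = (n+2)/2. Let V and Ṽ be independent, each uniformly distributed on 𝓘_{n+1} = {1, …, n+1}, and define the contour of the two-sided nested random set S = { v ∈ 𝓘_{n+1} : |v − c| ≤ |Ṽ − c| } by γ(v) = ℙ( |Ṽ − c| ≥ |v − c| ) = (n+1)^{-1} #{ ṽ ∈ 𝓘_{n+1} : |ṽ − c| ≥ |v − c| }. Then S is valid: for every α ∈ [0,1], ℙ( γ(V) ≤ k_n(α) ) ≤ α, where k_n(α) = ⌊(n+1)α⌋/(n+1). (Validity of the two-sided 'default' random set used for equal-tailed nonparametric prediction intervals.) -/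

import Mathlib

open MeasureTheory ENNReal

/-- **Validity of the two-sided 'default' random set.** Let `c = (n+2)/2` be the midpoint
of `𝓘_{n+1} = {1,…,n+1}`, let `V` be uniform on `𝓘_{n+1}`, and let
`γ(v) = (n+1)⁻¹ #{ṽ ∈ 𝓘_{n+1} : |ṽ - c| ≥ |v - c|}` be the contour of the two-sided
nested random set `S = {v : |v - c| ≤ |Ṽ - c|}`, `Ṽ ~ Unif(𝓘_{n+1})`.  Then for every
`α ∈ [0,1]`, `P(γ(V) ≤ k_n(α)) ≤ α`, where `k_n(α) = ⌊(n+1)α⌋/(n+1)`. -/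
theorem stmt16 (n : ℕ) (α : ℝ) (hα : α ∈ Set.Icc (0:ℝ) 1) :
    (PMF.uniformOfFinset (Finset.Icc 1 (n+1))
        (Finset.nonempty_Icc.mpr (by omega))).toMeasure
      {v : ℕ | (((Finset.Icc 1 (n+1)).filter fun vt : ℕ =>
            |(v:ℝ) - ((n:ℝ)+2)/2| ≤ |(vt:ℝ) - ((n:ℝ)+2)/2|).card : ℝ) / ((n:ℝ)+1)
          ≤ (⌊((n:ℝ)+1)*α⌋ : ℝ)/((n:ℝ)+1)}
      ≤ ENNReal.ofReal α := by
  obtain ⟨hα0, hα1⟩ := hα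
  set c : ℝ := ((n:ℝ)+2)/2 with hc
  set f : ℕ → ℕ := fun v => ((Finset.Icc 1 (n+1)).filter fun vt : ℕ =>
      |(v:ℝ) - c| ≤ |(vt:ℝ) - c|).card with hf
  -- key cardinality bound
  have key : ∀ m : ℕ, ((Finset.Icc 1 (n+1)).filter fun v => f v ≤ m).card ≤ m := by
    intro m
    set A := (Finset.Icc 1 (n+1)).filter (fun v => f v ≤ m) with hA
    rcases A.eq_empty_or_nonempty with h | h
    · simp [h]
    · obtain ⟨v0, hv0A, hmin⟩ := A.exists_min_image (fun v => |(v:ℝ) - c|) h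
      have hsub : A ⊆ (Finset.Icc 1 (n+1)).filter fun vt : ℕ =>
          |(v0:ℝ) - c| ≤ |(vt:ℝ) - c| := by
        intro w hw
        rw [Finset.mem_filter]
        refine ⟨(Finset.mem_filter.mp (hA ▸ hw)).1, hmin w hw⟩
      have h1 : A.card ≤ f v0 := Finset.card_le_card hsub
      have h2 : f v0 ≤ m := (Finset.mem_filter.mp hv0A).2
      omega
  have hNpos : (0:ℝ) < (n:ℝ)+1 := by positivity
  set m : ℕ := (⌊((n:ℝ)+1)*α⌋).toNat with hm
  have hfloor_nonneg : (0:ℤ) ≤ ⌊((n:ℝ)+1)*α⌋ := Int.floor_nonneg.mpr (by positivity)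
  have hmcast : ((m:ℝ)) = (⌊((n:ℝ)+1)*α⌋ : ℝ) := by
    rw [hm]
    exact_mod_cast congrArg (fun z : ℤ => (z:ℝ)) (Int.toNat_of_nonneg hfloor_nonneg)
  set F := (Finset.Icc 1 (n+1)).filter (fun v => f v ≤ m) with hF
  set S : Set ℕ := {v : ℕ | ((f v : ℝ)) / ((n:ℝ)+1) ≤ (⌊((n:ℝ)+1)*α⌋ : ℝ)/((n:ℝ)+1)} with hS
  have hScond : ∀ v : ℕ, v ∈ S ↔ f v ≤ m := by
    intro v
    rw [hS, Set.mem_setOf_eq, div_le_div_iff_of_pos_right hNpos, ← hmcast]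
    exact_mod_cast Iff.rfl
  have hsubset : S ⊆ (↑F : Set ℕ) ∪ ((↑(Finset.Icc 1 (n+1)) : Set ℕ))ᶜ := by
    intro v hv
    by_cases hvI : v ∈ Finset.Icc 1 (n+1)
    · left
      exact Finset.mem_coe.mpr (Finset.mem_filter.mpr ⟨hvI, (hScond v).mp hv⟩)
    · right; simpa using hvI
  set p := PMF.uniformOfFinset (Finset.Icc 1 (n+1))
      (Finset.nonempty_Icc.mpr (by omega : (1:ℕ) ≤ n+1)) with hp
  have hcompl : p.toMeasure ((↑(Finset.Icc 1 (n+1)) : Set ℕ))ᶜ = 0 := by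
    rw [p.toMeasure_apply_eq_zero_iff _]
    rw [PMF.support_uniformOfFinset]
    exact disjoint_compl_right
    exact MeasurableSet.of_discrete
  have hmono : p.toMeasure S ≤ p.toMeasure (↑F : Set ℕ) := by
    calc p.toMeasure S ≤ p.toMeasure ((↑F : Set ℕ) ∪ ((↑(Finset.Icc 1 (n+1)) : Set ℕ))ᶜ) :=
          measure_mono hsubset
      _ ≤ p.toMeasure (↑F : Set ℕ) + p.toMeasure ((↑(Finset.Icc 1 (n+1)) : Set ℕ))ᶜ :=
          measure_union_le _ _
      _ = p.toMeasure (↑F : Set ℕ) := by rw [hcompl, add_zero]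
  have hFmeas : p.toMeasure (↑F : Set ℕ) = (F.card : ℝ≥0∞) * ((n:ℝ≥0∞)+1)⁻¹ := by
    rw [PMF.toMeasure_apply_finset]
    have : ∀ a ∈ F, p a = ((n:ℝ≥0∞)+1)⁻¹ := by
      intro a ha
      have haI : a ∈ Finset.Icc 1 (n+1) := (Finset.mem_filter.mp ha).1
      rw [hp, PMF.uniformOfFinset_apply]
      simp [haI, Nat.card_Icc]
    rw [Finset.sum_congr rfl this, Finset.sum_const, nsmul_eq_mul]
  have hcard : F.card ≤ m := key m
  have hmle : (m:ℝ) ≤ ((n:ℝ)+1)*α := by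
    rw [hmcast]; exact Int.floor_le _
  calc p.toMeasure S ≤ (F.card : ℝ≥0∞) * ((n:ℝ≥0∞)+1)⁻¹ := by rw [← hFmeas]; exact hmono
    _ ≤ (m : ℝ≥0∞) * ((n:ℝ≥0∞)+1)⁻¹ := by
        exact mul_le_mul_left (by exact_mod_cast hcard) _
    _ = ENNReal.ofReal ((m:ℝ) * ((n:ℝ)+1)⁻¹) := by
        rw [ENNReal.ofReal_mul (by positivity), ENNReal.ofReal_natCast,
          ENNReal.ofReal_inv_of_pos hNpos]
        congr 1
        congr 1
        rw [ENNReal.ofReal_add (by positivity) zero_le_one, ENNReal.ofReal_natCast,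
          ENNReal.ofReal_one]
    _ ≤ ENNReal.ofReal α := by
        apply ENNReal.ofReal_le_ofReal
        rw [← div_eq_mul_inv, div_le_iff₀ hNpos]
        linarith [hmle]
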